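/- Let N ≥ 1 and let λ = (λ_1, …, λ_m) be a partition with all parts positive. Then the differential operator representing Tr(a†²a), namely D₂₁ : f ↦ Σ_{i,j,k=1}^N x_{ij} x_{jk} ∂f/∂x_{ik}, acts on the multi-trace polynomial p_λ by D₂₁ p_λ = Σ_{j=1}^m λ_j · p_{λ^{(j)}}, where λ^{(j)} denotes the partition obtained from λ by replacing the part λ_j with λ_j + 1. -/

import Mathlib

open MvPolynomial

/-- The matrix of indeterminates `X`, with entries `x_{ij}` in the polynomial ring
`ℝ[x_{ij} : 1 ≤ i,j ≤ N]`. -/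
noncomputable def Xmat (N : ℕ) : Matrix (Fin N) (Fin N) (MvPolynomial (Fin N × Fin N) ℝ) :=
  fun i j => MvPolynomial.X (i, j)

/-- The trace power `p_k = Tr(X^k)`; in particular `p_0 = N`. -/
noncomputable def trPow (N : ℕ) (k : ℕ) : MvPolynomial (Fin N × Fin N) ℝ :=
  Matrix.trace (Xmat N ^ k)

/-- The multi-trace polynomial `p_λ = p_{λ_1} ⋯ p_{λ_m}` attached to a partition
`λ = (λ_1, …, λ_m)` (given as a list of parts). -/
noncomputable def multiTrace (N : ℕ) (lam : List ℕ) : MvPolynomial (Fin N × Fin N) ℝ :=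
  (lam.map (trPow N)).prod

/-- The differential operator representing `Tr(a†² a)`:
`D₂₁ f = Σ_{i,j,k} x_{ij} x_{jk} ∂f/∂x_{ik}`. -/
noncomputable def D21 (N : ℕ) (f : MvPolynomial (Fin N × Fin N) ℝ) :
    MvPolynomial (Fin N × Fin N) ℝ :=
  ∑ i : Fin N, ∑ j : Fin N, ∑ k : Fin N,
    MvPolynomial.X (i, j) * MvPolynomial.X (j, k) * pderiv (i, k) f

lemma pderiv_matpow (N n : ℕ) (i k a b : Fin N) :
    pderiv (i, k) ((Xmat N ^ n) a b) =
      ∑ m ∈ Finset.range n, (Xmat N ^ m) a i * (Xmat N ^ (n - 1 - m)) k b := by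
  induction n generalizing b with
  | zero =>
    simp only [pow_zero, Matrix.one_apply]
    split <;> simp
  | succ n ih =>
    rw [pow_succ]
    rw [Matrix.mul_apply]
    rw [map_sum]
    have step : ∀ c : Fin N, pderiv (i, k) ((Xmat N ^ n) a c * Xmat N c b) =
        (∑ m ∈ Finset.range n, (Xmat N ^ m) a i * (Xmat N ^ (n - 1 - m)) k c) * Xmat N c b
          + (Xmat N ^ n) a c * (if c = i ∧ b = k then 1 else 0) := by
      intro c
      have hx : pderiv (i, k) (X (c, b) : MvPolynomial (Fin N × Fin N) ℝ)
          = if c = i ∧ b = k then 1 else 0 := by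
        rw [pderiv_X]
        by_cases h1 : c = i <;> by_cases h2 : b = k <;>
          simp [Pi.single_apply, Prod.ext_iff, h1, h2, @eq_comm _ i, @eq_comm _ k]
      rw [pderiv_mul, ih]
      show _ + (Xmat N ^ n) a c * pderiv (i, k) (X (c, b)) = _
      rw [hx]
    simp_rw [step]
    rw [Finset.sum_add_distrib]
    have t2 : (∑ c : Fin N, (Xmat N ^ n) a c * (if c = i ∧ b = k then 1 else 0)) =
        if b = k then (Xmat N ^ n) a i else 0 := by
      by_cases hb : b = k
      · subst hb
        simp
      · simp [hb]
    rw [t2]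
    have t1 : (∑ c : Fin N, (∑ m ∈ Finset.range n, (Xmat N ^ m) a i * (Xmat N ^ (n - 1 - m)) k c) * Xmat N c b)
        = ∑ m ∈ Finset.range n, (Xmat N ^ m) a i * (Xmat N ^ (n - m)) k b := by
      simp_rw [Finset.sum_mul]
      rw [Finset.sum_comm]
      refine Finset.sum_congr rfl fun m hm => ?_
      rw [Finset.mem_range] at hm
      have : Xmat N ^ (n - m) = Xmat N ^ (n - 1 - m) * Xmat N := by
        rw [← pow_succ]
        congr 1
        omega
      rw [this, Matrix.mul_apply, Finset.mul_sum]
      exact Finset.sum_congr rfl fun x _ => by ring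
    rw [t1, Finset.sum_range_succ]
    simp only [Nat.add_sub_cancel, Nat.sub_self, pow_zero, Matrix.one_apply]
    by_cases hb : b = k
    · subst hb; simp
    · simp [hb, Ne.symm hb]

lemma pderiv_trPow (N n : ℕ) (hn : 1 ≤ n) (i k : Fin N) :
    pderiv (i, k) (trPow N n) = (n : MvPolynomial (Fin N × Fin N) ℝ) * (Xmat N ^ (n - 1)) k i := by
  rw [trPow, Matrix.trace]
  simp only [Matrix.diag]
  rw [map_sum]
  simp_rw [pderiv_matpow]
  rw [Finset.sum_comm]
  have : ∀ m ∈ Finset.range n, (∑ a : Fin N, (Xmat N ^ m) a i * (Xmat N ^ (n - 1 - m)) k a)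
      = (Xmat N ^ (n - 1)) k i := by
    intro m hm
    rw [Finset.mem_range] at hm
    have : Xmat N ^ (n - 1) = Xmat N ^ (n - 1 - m) * Xmat N ^ m := by
      rw [← pow_add]; congr 1; omega
    rw [this, Matrix.mul_apply]
    refine Finset.sum_congr rfl fun a _ => mul_comm _ _
  rw [Finset.sum_congr rfl this, Finset.sum_const, Finset.card_range, nsmul_eq_mul]

lemma D21_trPow (N n : ℕ) (hn : 1 ≤ n) :
    D21 N (trPow N n) = (n : MvPolynomial (Fin N × Fin N) ℝ) * trPow N (n + 1) := by
  unfold D21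
  simp_rw [pderiv_trPow N n hn]
  have key : ∀ i : Fin N, (∑ j : Fin N, ∑ k : Fin N,
      X (i, j) * X (j, k) * ((n : MvPolynomial (Fin N × Fin N) ℝ) * (Xmat N ^ (n - 1)) k i))
      = (n : MvPolynomial (Fin N × Fin N) ℝ) * (Xmat N ^ (n + 1)) i i := by
    intro i
    have : Xmat N ^ (n + 1) = Xmat N * (Xmat N * Xmat N ^ (n - 1)) := by
      conv_lhs => rw [show n + 1 = 1 + (1 + (n - 1)) from by omega]
      rw [pow_add, pow_add, pow_one]
    rw [this, Matrix.mul_apply, Finset.mul_sum]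
    refine Finset.sum_congr rfl fun j _ => ?_
    rw [Matrix.mul_apply, Finset.mul_sum, Finset.mul_sum]
    refine Finset.sum_congr rfl fun k _ => ?_
    simp only [Xmat]
    ring
  simp_rw [key]
  rw [← Finset.mul_sum, trPow, Matrix.trace]
  rfl

lemma D21_mul (N : ℕ) (f g : MvPolynomial (Fin N × Fin N) ℝ) :
    D21 N (f * g) = D21 N f * g + f * D21 N g := by
  unfold D21
  simp_rw [pderiv_mul, mul_add, Finset.sum_add_distrib, Finset.sum_mul, Finset.mul_sum]
  refine congrArg₂ (· + ·) ?_ ?_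
  · refine Finset.sum_congr rfl fun i _ => Finset.sum_congr rfl fun j _ =>
      Finset.sum_congr rfl fun k _ => by ring
  · refine Finset.sum_congr rfl fun i _ => Finset.sum_congr rfl fun j _ =>
      Finset.sum_congr rfl fun k _ => by ring

/-- Theorem 1(i) of the paper (unnormalized form): for a partition `λ` with all parts
positive, `D₂₁ p_λ = Σ_{j=1}^m λ_j · p_{λ^{(j)}}`, where `λ^{(j)}` is obtained from `λ`
by replacing the part `λ_j` with `λ_j + 1`. -/
theorem trace_adag2_a_on_multiTrace (N : ℕ) (hN : 1 ≤ N) (lam : List ℕ)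
    (hsort : lam.Pairwise (· ≥ ·)) (hpos : ∀ p ∈ lam, 0 < p) :
    D21 N (multiTrace N lam) =
      ∑ j : Fin lam.length,
        (lam.get j : MvPolynomial (Fin N × Fin N) ℝ) *
          multiTrace N (lam.set j (lam.get j + 1)) := by
  clear hsort
  induction lam with
  | nil =>
    simp [multiTrace, D21]
  | cons a t ih =>
    have ha : 1 ≤ a := hpos a (List.mem_cons_self)
    have ht : ∀ p ∈ t, 0 < p := fun p hp => hpos p (List.mem_cons_of_mem a hp)
    have hmul : multiTrace N (a :: t) = trPow N a * multiTrace N t := by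
      simp [multiTrace]
    rw [hmul, D21_mul, D21_trPow N a ha, ih ht]
    show _ = ∑ j : Fin (t.length + 1),
        ((a :: t).get j : MvPolynomial (Fin N × Fin N) ℝ) *
          multiTrace N ((a :: t).set j ((a :: t).get j + 1))
    rw [Fin.sum_univ_succ]
    congr 1
    · simp only [List.get_eq_getElem, Fin.val_zero, List.getElem_cons_zero, List.set_cons_zero]
      simp [multiTrace]
      ring
    · rw [Finset.mul_sum]
      refine Finset.sum_congr rfl fun j _ => ?_
      simp only [List.get_eq_getElem, Fin.val_succ, List.getElem_cons_succ, List.set_cons_succ,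
        multiTrace, List.map_cons, List.prod_cons]
      ring
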